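/- Structure equation for the inverted map: Let n ≥ 2, let U ⊆ ℝ² be open, and let u : U → ℝ^{n+1} be smooth, nowhere vanishing, with Δu = 0 on U. Set v = u/|u|² and, for 1 ≤ i, j ≤ n+1, X_{i,j} = 2 (v_j ∇v_i − v_i ∇v_j)/|v|⁴. Then for each 1 ≤ j ≤ n+1 one has the pointwise identity on U: −div(∇v_j/|v|²) = Σ_{i=1}^{n+1} ⟨X_{i,j}, ∇v_i⟩, where ⟨·,·⟩ is the Euclidean inner product on ℝ². -/

import Mathlib

open MeasureTheory Filter Topology Set
open scoped RealInnerProductSpace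

noncomputable section

/-- The Euclidean plane. -/
abbrev E2 : Type := EuclideanSpace ℝ (Fin 2)
/-- Euclidean space `ℝ^{n+1}`. -/
abbrev Ey (n : ℕ) : Type := EuclideanSpace ℝ (Fin (n + 1))

/-- Standard basis vectors of the plane. -/
def e2 (i : Fin 2) : E2 := EuclideanSpace.single i 1


lemma pd_mul (f g : E2 → ℝ) (x : E2) (hf : DifferentiableAt ℝ f x)
    (hg : DifferentiableAt ℝ g x) (w : E2) :
    fderiv ℝ (fun y => f y * g y) x w
      = f x * fderiv ℝ g x w + g x * fderiv ℝ f x w := by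
  rw [fderiv_fun_mul hf hg]; simp [smul_eq_mul]

lemma pd_inv (f : E2 → ℝ) (x : E2) (hf : DifferentiableAt ℝ f x) (hx : f x ≠ 0) (w : E2) :
    fderiv ℝ (fun y => (f y)⁻¹) x w = -((f x)⁻¹)^2 * fderiv ℝ f x w := by
  have h := ((hasFDerivAt_inv' (𝕜 := ℝ) hx).comp x hf.hasFDerivAt).fderiv
  rw [show (fun y => (f y)⁻¹) = Inv.inv ∘ f from rfl, h]
  simp [ContinuousLinearMap.comp_apply, ContinuousLinearMap.mulLeftRight_apply]
  ring

lemma pd_proj {m : Type*} [Fintype m] (F : E2 → EuclideanSpace ℝ m) (x : E2)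
    (h : DifferentiableAt ℝ F x) (b : m) (w : E2) :
    fderiv ℝ (fun y => F y b) x w = fderiv ℝ F x w b := by
  have h1 : (fun y => F y b) = fun y => EuclideanSpace.proj (𝕜 := ℝ) b (F y) := by
    funext y; simp
  rw [h1]
  rw [show (fun y => EuclideanSpace.proj (𝕜 := ℝ) b (F y)) = (⇑(EuclideanSpace.proj (𝕜 := ℝ) b)) ∘ F from rfl]
  rw [fderiv_comp x (EuclideanSpace.proj (𝕜 := ℝ) b).differentiableAt h,
    ContinuousLinearMap.fderiv]
  simp

lemma grad_apply (f : E2 → ℝ) (y : E2) (a : Fin 2) :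
    gradient f y a = fderiv ℝ f y (e2 a) := by
  have : fderiv ℝ f y (e2 a) = ⟪gradient f y, e2 a⟫ := by
    simp [gradient, InnerProductSpace.toDual_symm_apply]
  rw [this, e2, EuclideanSpace.inner_single_right]
  simp

lemma inner_e2 (w z : E2) : ⟪w, z⟫ = ∑ a : Fin 2, w a * z a := by
  simp [PiLp.inner_apply, RCLike.inner_apply, conj_trivial]; ring


/-- The Laplacian of a map on the plane. -/
def lapl {F : Type*} [NormedAddCommGroup F] [NormedSpace ℝ F] (u : E2 → F) (x : E2) : F :=
  ∑ i : Fin 2, fderiv ℝ (fun y => fderiv ℝ u y (e2 i)) x (e2 i)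

/-- The squared (Frobenius) norm `|∇u|² = Σ_j |∇u_j|²` of the gradient. -/
def gradSq {F : Type*} [NormedAddCommGroup F] [NormedSpace ℝ F] (u : E2 → F) (x : E2) : ℝ :=
  ∑ i : Fin 2, ‖fderiv ℝ u x (e2 i)‖ ^ 2

/-- The divergence of a plane vector field. -/
def divE (F : E2 → E2) (x : E2) : ℝ :=
  ∑ i : Fin 2, fderiv ℝ F x (e2 i) i

/-- The composition `σ ∘ u` of `u` with the inversion `σ(z) = z/|z|²` with respect to the
unit sphere. -/
def invmap {n : ℕ} (u : E2 → Ey n) : E2 → Ey n :=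
  fun x => (‖u x‖ ^ 2)⁻¹ • u x

/-- The vector field `X_{i,j} = 2 (v_j ∇v_i − v_i ∇v_j)/|v|⁴`. -/
def Xfield {n : ℕ} (v : E2 → Ey n) (i j : Fin (n + 1)) (x : E2) : E2 :=
  (2 / ‖v x‖ ^ 4) •
    (v x j • gradient (fun y => v y i) x - v x i • gradient (fun y => v y j) x)

set_option maxHeartbeats 2000000 in
/-- **Structure equation for the inverted map.** If `u` is smooth, nowhere vanishing and
harmonic on an open set `U ⊆ ℝ²`, `v = u/|u|²` and
`X_{i,j} = 2 (v_j ∇v_i − v_i ∇v_j)/|v|⁴`, then for each `j` one has on `U`: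
`−div(∇v_j/|v|²) = Σ_i ⟨X_{i,j}, ∇v_i⟩`. -/
theorem structure_equation_inverted_map (n : ℕ) (hn : 2 ≤ n)
    (U : Set E2) (hU : IsOpen U) (u : E2 → Ey n)
    (hsm : ContDiffOn ℝ (⊤ : ℕ∞) u U) (hnv : ∀ x ∈ U, u x ≠ 0)
    (hharm : ∀ x ∈ U, lapl u x = 0) :
    ∀ j : Fin (n + 1), ∀ x ∈ U,
      -divE (fun y => (‖invmap u y‖ ^ 2)⁻¹ • gradient (fun z => invmap u z j) y) x
        = ∑ i : Fin (n + 1),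
            ⟪Xfield (invmap u) i j x, gradient (fun z => invmap u z i) x⟫ := by
  intro j x hx
  set q : E2 → ℝ := fun y => ‖u y‖ ^ 2 with hq_def
  have hq_sum : ∀ y, q y = ∑ i, (u y i)^2 := by
    intro y
    rw [hq_def]
    simp only [EuclideanSpace.norm_eq]
    rw [Real.sq_sqrt (by positivity)]
    congr 1; funext i; rw [Real.norm_eq_abs, sq_abs]
  have hqne : ∀ y ∈ U, q y ≠ 0 := by
    intro y hy
    simp only [hq_def]
    exact pow_ne_zero _ (norm_ne_zero_iff.mpr (hnv y hy))
  have hcu : ∀ y ∈ U, ContDiffAt ℝ (⊤:ℕ∞) u y := fun y hy => hsm.contDiffAt (hU.mem_nhds hy)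
  have hui : ∀ (i : Fin (n+1)), ∀ y ∈ U, ContDiffAt ℝ (⊤:ℕ∞) (fun z => u z i) y := by
    intro i y hy
    exact (EuclideanSpace.proj (𝕜 := ℝ) i).contDiff.contDiffAt.comp y (hcu y hy)
  have hqc : ∀ y ∈ U, ContDiffAt ℝ (⊤:ℕ∞) q y := by
    intro y hy
    have : q = fun z => ∑ i, (u z i)^2 := funext hq_sum
    rw [this]
    exact ContDiffAt.sum (fun i _ => (hui i y hy).pow 2)
  have hvj_eq : ∀ (i : Fin (n+1)) (y : E2), invmap u y i = (q y)⁻¹ * u y i := by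
    intro i y; simp [invmap, hq_def]
  have hvc : ∀ (i : Fin (n+1)), ∀ y ∈ U, ContDiffAt ℝ (⊤:ℕ∞) (fun z => invmap u z i) y := by
    intro i y hy
    have : (fun z => invmap u z i) = fun z => (q z)⁻¹ * u z i := funext (hvj_eq i)
    rw [this]
    exact ((hqc y hy).inv (hqne y hy)).mul (hui i y hy)
  have hDA : ∀ (i : Fin (n+1)) (a : Fin 2), ∀ y ∈ U,
      DifferentiableAt ℝ (fun z => fderiv ℝ (fun w => u w i) z (e2 a)) y := by
    intro i a y hy
    have h1 : ContDiffAt ℝ 1 (fderiv ℝ (fun w => u w i)) y :=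
      (hui i y hy).fderiv_right (by norm_cast)
    have h2 : (fun z => fderiv ℝ (fun w => u w i) z (e2 a))
        = fun z => (ContinuousLinearMap.apply ℝ ℝ (e2 a)) (fderiv ℝ (fun w => u w i) z) := rfl
    rw [h2]
    exact ((ContinuousLinearMap.apply ℝ ℝ (e2 a)).differentiableAt).comp y (h1.differentiableAt one_ne_zero)
  have le1 : ((⊤:ℕ∞) : WithTop ℕ∞) ≠ 0 := by simp
  have hud : ∀ (i : Fin (n+1)), ∀ y ∈ U, DifferentiableAt ℝ (fun z => u z i) y :=
    fun i y hy => (hui i y hy).differentiableAt le1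
  have hqd : ∀ y ∈ U, DifferentiableAt ℝ q y := fun y hy => (hqc y hy).differentiableAt le1
  set DU : Fin (n+1) → Fin 2 → E2 → ℝ :=
    fun i a y => fderiv ℝ (fun z => u z i) y (e2 a) with hDU_def
  have hQd : ∀ (a : Fin 2), ∀ y ∈ U, fderiv ℝ q y (e2 a) = 2 * ∑ i, u y i * DU i a y := by
    intro a y hy
    have hq2 : q = fun z => ∑ i, u z i * u z i := by
      funext z; rw [hq_sum z]; exact Finset.sum_congr rfl fun i _ => sq (u z i)
    rw [hq2, fderiv_fun_sum (fun i _ => ((hud i y hy).fun_mul (hud i y hy)))]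
    rw [ContinuousLinearMap.sum_apply, Finset.mul_sum]
    refine Finset.sum_congr rfl fun i _ => ?_
    rw [pd_mul _ _ _ (hud i y hy) (hud i y hy)]
    rw [hDU_def]; ring
  have hVd : ∀ (i : Fin (n+1)) (a : Fin 2), ∀ y ∈ U,
      fderiv ℝ (fun z => invmap u z i) y (e2 a)
        = (q y)⁻¹ * DU i a y + u y i * (-((q y)⁻¹)^2 * fderiv ℝ q y (e2 a)) := by
    intro i a y hy
    have h1 : (fun z => invmap u z i) = fun z => (q z)⁻¹ * u z i := funext (hvj_eq i)
    rw [h1, pd_mul _ _ _ ((hqd y hy).fun_inv (hqne y hy)) (hud i y hy),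
      pd_inv _ _ (hqd y hy) (hqne y hy)]
  set S : Fin 2 → E2 → ℝ := fun a y => ∑ i, u y i * DU i a y with hS_def
  set g : Fin 2 → E2 → ℝ := fun a y => DU j a y - 2 * (u y j * ((q y)⁻¹ * S a y)) with hg_def
  have hFg : ∀ a : Fin 2,
      (fun y => q y * fderiv ℝ (fun z => invmap u z j) y (e2 a)) =ᶠ[𝓝 x] g a := by
    intro a
    filter_upwards [hU.mem_nhds hx] with y hy
    rw [hVd j a y hy, hQd a y hy, hg_def]
    have h0 := hqne y hy
    simp only [hS_def]
    field_simp
    ring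
  -- differentiability of S a at x
  have hSd : ∀ a : Fin 2, DifferentiableAt ℝ (S a) x := by
    intro a
    refine DifferentiableAt.fun_sum (fun i _ => ?_)
    exact (hud i x hx).fun_mul (hDA i a x hx)
  set C : Fin (n+1) → Fin 2 → ℝ := fun i a => fderiv ℝ (fun y => DU i a y) x (e2 a) with hC_def
  set Qd : Fin 2 → ℝ := fun a => fderiv ℝ q x (e2 a) with hQd_def
  have hpdS : ∀ a : Fin 2, fderiv ℝ (S a) x (e2 a)
      = ∑ i, (DU i a x * DU i a x + u x i * C i a) := by
    intro a
    rw [hS_def]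
    rw [fderiv_fun_sum (fun i _ => (hud i x hx).fun_mul (hDA i a x hx))]
    rw [ContinuousLinearMap.sum_apply]
    refine Finset.sum_congr rfl fun i _ => ?_
    rw [pd_mul _ _ _ (hud i x hx) (hDA i a x hx)]
    rw [hC_def]; ring
  have hpdg : ∀ a : Fin 2, fderiv ℝ (g a) x (e2 a)
      = C j a - 2 * (DU j a x * ((q x)⁻¹ * S a x)
          + u x j * ((q x)⁻¹ * (∑ i, (DU i a x * DU i a x + u x i * C i a))
              + S a x * (-((q x)⁻¹)^2 * Qd a))) := by
    intro a
    have d1 : DifferentiableAt ℝ (fun y => (q y)⁻¹) x := (hqd x hx).inv (hqne x hx)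
    have d2 : DifferentiableAt ℝ (fun y => (q y)⁻¹ * S a y) x := d1.mul (hSd a)
    have d3 : DifferentiableAt ℝ (fun y => u y j * ((q y)⁻¹ * S a y)) x := (hud j x hx).mul d2
    rw [hg_def]
    simp only []
    rw [fderiv_fun_sub (hDA j a x hx) (DifferentiableAt.const_mul d3 2)]
    rw [ContinuousLinearMap.sub_apply]
    rw [fderiv_const_mul d3 2, ContinuousLinearMap.smul_apply]
    rw [pd_mul _ _ _ (hud j x hx) d2]
    rw [pd_mul _ _ _ d1 (hSd a)]
    rw [pd_inv _ _ (hqd x hx) (hqne x hx)]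
    rw [hpdS a]
    simp only [hC_def, hQd_def, hDU_def, smul_eq_mul]
    ring
  have hw : ∀ y, (‖invmap u y‖^2)⁻¹ = q y := by
    intro y
    have h1 : ‖invmap u y‖^2 = ((q y)⁻¹)^2 * q y := by
      rw [show invmap u y = (q y)⁻¹ • u y from rfl, norm_smul, mul_pow]
      rw [hq_def]
      simp [sq_abs]
    rw [h1]
    by_cases h : q y = 0
    · simp [h]
    · field_simp
  set F : E2 → E2 := fun y => q y • gradient (fun z => invmap u z j) y with hF_def
  have hFeq : (fun y => (‖invmap u y‖^2)⁻¹ • gradient (fun z => invmap u z j) y) = F := by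
    funext y; rw [hw y]
  have hgrad_diff : DifferentiableAt ℝ (fun y => gradient (fun z => invmap u z j) y) x := by
    have h1 : ContDiffAt ℝ 1 (fderiv ℝ (fun z => invmap u z j)) x :=
      (hvc j x hx).fderiv_right (by norm_cast)
    have h2 : (fun y => gradient (fun z => invmap u z j) y)
        = fun y => (InnerProductSpace.toDual ℝ E2).symm (fderiv ℝ (fun z => invmap u z j) y) := rfl
    rw [h2]
    exact ((InnerProductSpace.toDual ℝ E2).symm.toContinuousLinearEquiv.differentiableAt).comp x
      (h1.differentiableAt one_ne_zero)
  have hFdiff : DifferentiableAt ℝ F x := (hqd x hx).smul hgrad_diff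
  have hdivE : divE F x = ∑ a : Fin 2, fderiv ℝ (g a) x (e2 a) := by
    unfold divE
    refine Finset.sum_congr rfl fun a _ => ?_
    rw [← pd_proj F x hFdiff a (e2 a)]
    have h3 : (fun y => F y a) = fun y => q y * fderiv ℝ (fun z => invmap u z j) y (e2 a) := by
      funext y
      simp only [hF_def, PiLp.smul_apply, smul_eq_mul, grad_apply]
    rw [h3, (hFg a).fderiv_eq]
  have hCsum : ∀ i : Fin (n+1), ∑ a : Fin 2, C i a = 0 := by
    intro i
    have hudiff : ∀ y ∈ U, DifferentiableAt ℝ u y := fun y hy => (hcu y hy).differentiableAt le1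
    have hstep : ∀ a : Fin 2, (fderiv ℝ (fun y => fderiv ℝ u y (e2 a)) x (e2 a)) i = C i a := by
      intro a
      have hFa : DifferentiableAt ℝ (fun y => fderiv ℝ u y (e2 a)) x := by
        have h1 : ContDiffAt ℝ 1 (fderiv ℝ u) x := (hcu x hx).fderiv_right (by norm_cast)
        have h2 : (fun y => fderiv ℝ u y (e2 a))
            = fun y => (ContinuousLinearMap.apply ℝ (Ey n) (e2 a)) (fderiv ℝ u y) := rfl
        rw [h2]
        exact ((ContinuousLinearMap.apply ℝ (Ey n) (e2 a)).differentiableAt).comp x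
          (h1.differentiableAt one_ne_zero)
      rw [← pd_proj _ x hFa i (e2 a)]
      have he : (fun y => fderiv ℝ u y (e2 a) i) =ᶠ[𝓝 x] fun y => DU i a y := by
        filter_upwards [hU.mem_nhds hx] with y hy
        exact (pd_proj u y (hudiff y hy) i (e2 a)).symm
      rw [he.fderiv_eq, hC_def]
    have hlap := hharm x hx
    unfold lapl at hlap
    calc ∑ a : Fin 2, C i a
        = ∑ a : Fin 2, (fderiv ℝ (fun y => fderiv ℝ u y (e2 a)) x (e2 a)) i :=
          Finset.sum_congr rfl fun a _ => (hstep a).symm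
      _ = (∑ a : Fin 2, fderiv ℝ (fun y => fderiv ℝ u y (e2 a)) x (e2 a)) i := by
          rw [Fin.sum_univ_two, Fin.sum_univ_two, PiLp.add_apply]
      _ = 0 := by rw [hlap]; rfl
  -- pointwise values at x
  set Vd : Fin (n+1) → Fin 2 → ℝ :=
    fun i a => (q x)⁻¹ * DU i a x + u x i * (-((q x)⁻¹)^2 * Qd a) with hVd_def
  have hSx : ∀ a : Fin 2, S a x = Qd a / 2 := by
    intro a
    have h := hQd a x hx
    change Qd a = 2 * S a x at h
    linarith
  have hsum_u2 : (∑ i, u x i * u x i) = q x := by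
    rw [hq_sum x]
    exact Finset.sum_congr rfl fun i _ => (sq (u x i)).symm
  have hgrad_a : ∀ (i : Fin (n+1)) (a : Fin 2),
      gradient (fun z => invmap u z i) x a = Vd i a := by
    intro i a
    rw [grad_apply, hVd i a x hx]
  have h4 : (2:ℝ)/‖invmap u x‖^4 = 2*(q x)^2 := by
    have h2 : ‖invmap u x‖^2 = (q x)⁻¹ := by rw [← hw x, inv_inv]
    have h3 : ‖invmap u x‖^4 = ((q x)⁻¹)^2 := by
      rw [show ‖invmap u x‖^4 = (‖invmap u x‖^2)^2 by ring, h2]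
    rw [h3]
    have hqx := hqne x hx
    field_simp
  have hRHS : (∑ i, ⟪Xfield (invmap u) i j x, gradient (fun z => invmap u z i) x⟫)
      = ∑ a : Fin 2, ∑ i, (2*(q x)^2)
          * (((q x)⁻¹ * u x j) * Vd i a - ((q x)⁻¹ * u x i) * Vd j a) * Vd i a := by
    have hterm : ∀ i : Fin (n+1), ⟪Xfield (invmap u) i j x, gradient (fun z => invmap u z i) x⟫
        = ∑ a : Fin 2, (2*(q x)^2)
            * (((q x)⁻¹ * u x j) * Vd i a - ((q x)⁻¹ * u x i) * Vd j a) * Vd i a := by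
      intro i
      rw [inner_e2]
      refine Finset.sum_congr rfl fun a _ => ?_
      rw [hgrad_a i a]
      have hX : Xfield (invmap u) i j x a
          = (2*(q x)^2) * (((q x)⁻¹ * u x j) * Vd i a - ((q x)⁻¹ * u x i) * Vd j a) := by
        simp only [Xfield, PiLp.smul_apply, PiLp.sub_apply, smul_eq_mul]
        rw [hgrad_a i a, hgrad_a j a, hvj_eq i x, hvj_eq j x, h4]
      rw [hX]
    rw [Finset.sum_congr rfl fun i _ => hterm i, Finset.sum_comm]
  have hRa : ∀ a : Fin 2,
      (∑ i, (2*(q x)^2) * (((q x)⁻¹ * u x j) * Vd i a - ((q x)⁻¹ * u x i) * Vd j a) * Vd i a)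
        = DU j a x * Qd a * (q x)⁻¹ - u x j * Qd a^2 * ((q x)⁻¹)^2
            + 2 * u x j * (∑ i, DU i a x * DU i a x) * (q x)⁻¹ := by
    intro a
    have hqx := hqne x hx
    have e1 : ∀ i : Fin (n+1),
        (2*(q x)^2) * (((q x)⁻¹ * u x j) * Vd i a - ((q x)⁻¹ * u x i) * Vd j a) * Vd i a
          = (2*(q x)^2 * ((q x)⁻¹)^3 * u x j) * (DU i a x * DU i a x)
            + (2*(2*(q x)^2) * ((q x)⁻¹)^2 * (-((q x)⁻¹)^2 * Qd a) * u x j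
               - (2*(q x)^2) * ((q x)⁻¹)^2 * Vd j a) * (u x i * DU i a x)
            + ((2*(q x)^2) * ((q x)⁻¹) * (-((q x)⁻¹)^2 * Qd a)^2 * u x j
               - (2*(q x)^2) * ((q x)⁻¹) * (-((q x)⁻¹)^2 * Qd a) * Vd j a) * (u x i * u x i) := by
      intro i
      simp only [hVd_def]
      ring
    rw [Finset.sum_congr rfl fun i _ => e1 i]
    rw [Finset.sum_add_distrib, Finset.sum_add_distrib, ← Finset.mul_sum, ← Finset.mul_sum,
      ← Finset.mul_sum]
    rw [(show (∑ i : Fin (n+1), u x i * DU i a x) = Qd a / 2 from hSx a)]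
    rw [hsum_u2]
    simp only [hVd_def]
    field_simp
    ring
  have hCj : C j 0 + C j 1 = 0 := by
    have h := hCsum j
    rwa [Fin.sum_univ_two] at h
  have hWsum : (∑ i, u x i * C i 0) + (∑ i, u x i * C i 1) = 0 := by
    rw [← Finset.sum_add_distrib]
    have hz : ∀ i : Fin (n+1), u x i * C i 0 + u x i * C i 1 = 0 := by
      intro i
      have h := hCsum i
      rw [Fin.sum_univ_two] at h
      rw [← mul_add, h, mul_zero]
    rw [Finset.sum_congr rfl fun i _ => hz i, Finset.sum_const_zero]
  have hLHS : -divE (fun y => (‖invmap u y‖ ^ 2)⁻¹ • gradient (fun z => invmap u z j) y) x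
      = ∑ a : Fin 2, (DU j a x * Qd a * (q x)⁻¹ - u x j * Qd a^2 * ((q x)⁻¹)^2
          + 2 * u x j * (∑ i, DU i a x * DU i a x) * (q x)⁻¹) := by
    rw [hFeq, hdivE]
    rw [Finset.sum_congr rfl fun a _ => hpdg a]
    rw [Fin.sum_univ_two, Fin.sum_univ_two, Finset.sum_add_distrib, Finset.sum_add_distrib,
      hSx 0, hSx 1]
    linear_combination (-1 : ℝ) * hCj + (2 * u x j * (q x)⁻¹) * hWsum
  rw [hLHS, hRHS]
  exact Finset.sum_congr rfl fun a _ => (hRa a).symm
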